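/- Let G be a connected graph that is not bipartite and satisfies Δ(G) ≤ 2χ(G) − 3. Then the corona H of G satisfies χ_pcf(H) = χ(G). -/

import Mathlib

open SimpleGraph

/-- A proper conflict-free coloring: proper, and every non-isolated vertex has a color
appearing exactly once in its open neighborhood. -/
def IsPCFColoring {V : Type*} (G : SimpleGraph V) {n : ℕ} (c : V → Fin n) : Prop :=
  (∀ u v, G.Adj u v → c u ≠ c v) ∧
  ∀ v : V, (G.neighborSet v).Nonempty →
    ∃ k : Fin n, ∃! u, u ∈ G.neighborSet v ∧ c u = k

/-- The PCF chromatic number. -/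
noncomputable def pcfChromNum {V : Type*} (G : SimpleGraph V) : ℕ :=
  sInf {n | ∃ c : V → Fin n, IsPCFColoring G c}

/-- The chromatic number (as a natural number). -/
noncomputable def chromNum {V : Type*} (G : SimpleGraph V) : ℕ :=
  sInf {n | G.Colorable n}
/-- The corona of a graph: attach one pendant vertex to each vertex. -/
def corona {V : Type*} (G : SimpleGraph V) : SimpleGraph (V ⊕ V) :=
  SimpleGraph.fromRel (fun a b => match a, b with
    | Sum.inl u, Sum.inl v => G.Adj u v
    | Sum.inl u, Sum.inr v => u = v
    | _, _ => False)
lemma corona_adj_ll {V : Type*} (G : SimpleGraph V) (u v : V) :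
    (corona G).Adj (Sum.inl u) (Sum.inl v) ↔ G.Adj u v := by
  simp only [corona, fromRel_adj]
  constructor
  · rintro ⟨-, h | h⟩
    · exact h
    · exact h.symm
  · intro h; exact ⟨by simp [h.ne], Or.inl h⟩

lemma corona_adj_lr {V : Type*} (G : SimpleGraph V) (u v : V) :
    (corona G).Adj (Sum.inl u) (Sum.inr v) ↔ u = v := by
  simp [corona, fromRel_adj]

lemma corona_adj_rl {V : Type*} (G : SimpleGraph V) (u v : V) :
    (corona G).Adj (Sum.inr u) (Sum.inl v) ↔ v = u := by
  simp [corona, fromRel_adj]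

lemma corona_adj_rr {V : Type*} (G : SimpleGraph V) (u v : V) :
    ¬ (corona G).Adj (Sum.inr u) (Sum.inr v) := by
  simp [corona, fromRel_adj]

theorem pcf_corona_nonbipartite {V : Type*} [Fintype V] (G : SimpleGraph V)
    [DecidableRel G.Adj] (hG : G.Connected) (hbip : ¬ G.Colorable 2)
    (hdeg : G.maxDegree ≤ 2 * chromNum G - 3) :
    pcfChromNum (corona G) = chromNum G := by
  classical
  set k := chromNum G with hkdef
  have hset : {n | G.Colorable n}.Nonempty := ⟨Fintype.card V, G.colorable_of_fintype⟩
  have hcol : G.Colorable k := Nat.sInf_mem hset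
  have hk3 : 3 ≤ k := by
    by_contra h
    exact hbip (hcol.mono (by omega))
  obtain ⟨c0⟩ := hcol
  -- For each v, a color ≠ c0 v occurring at most once in the neighborhood
  have key : ∀ v : V, ∃ j : Fin k, j ≠ c0 v ∧
      ((G.neighborFinset v).filter (fun u => c0 u = j)).card ≤ 1 := by
    intro v
    by_contra h
    push_neg at h
    have hdegv : G.degree v ≤ 2 * k - 3 := le_trans (G.degree_le_maxDegree v) hdeg
    have hsum : G.degree v =
        ∑ j : Fin k, ((G.neighborFinset v).filter (fun u => c0 u = j)).card := by
      exact Finset.card_eq_sum_card_fiberwise (fun u _ => Finset.mem_univ (c0 u))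
    have hlb : ∀ j ∈ Finset.univ \ {c0 v},
        2 ≤ ((G.neighborFinset v).filter (fun u => c0 u = j)).card := by
      intro j hj
      simp only [Finset.mem_sdiff, Finset.mem_singleton] at hj
      exact h j hj.2
    have h1 : 2 * (k - 1) ≤ ∑ j ∈ Finset.univ \ {c0 v},
        ((G.neighborFinset v).filter (fun u => c0 u = j)).card := by
      have := Finset.sum_le_sum hlb
      have hcard : (Finset.univ \ {c0 v} : Finset (Fin k)).card = k - 1 := by
        rw [Finset.card_sdiff_of_subset (by simp)]
        simp
      calc 2 * (k - 1) = ∑ _j ∈ Finset.univ \ {c0 v}, 2 := by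
            rw [Finset.sum_const, hcard, smul_eq_mul, mul_comm]
        _ ≤ _ := this
    have h2 : ∑ j ∈ Finset.univ \ {c0 v},
        ((G.neighborFinset v).filter (fun u => c0 u = j)).card ≤ G.degree v := by
      rw [hsum]
      exact Finset.sum_le_sum_of_subset (Finset.sdiff_subset)
    omega
  choose j0 hj0ne hj0card using key
  -- Pendant colors
  have pend : ∀ v : V, ∃ p : Fin k, p ≠ c0 v ∧
      ((p = j0 v ∧ (G.neighborFinset v).filter (fun u => c0 u = j0 v) = ∅) ∨
       (p ≠ j0 v ∧ ∃ u0, (G.neighborFinset v).filter (fun u => c0 u = j0 v) = {u0})) := by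
    intro v
    rcases Nat.le_one_iff_eq_zero_or_eq_one.mp (hj0card v) with h0 | h1
    · exact ⟨j0 v, hj0ne v, Or.inl ⟨rfl, Finset.card_eq_zero.mp h0⟩⟩
    · obtain ⟨u0, hu0⟩ := Finset.card_eq_one.mp h1
      have : (Finset.univ \ {c0 v, j0 v} : Finset (Fin k)).Nonempty := by
        rw [← Finset.card_pos, Finset.card_sdiff_of_subset (by simp)]
        have : ({c0 v, j0 v} : Finset (Fin k)).card ≤ 2 :=
          Finset.card_insert_le _ _ |>.trans (by simp)
        simp only [Finset.card_univ, Fintype.card_fin]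
        omega
      obtain ⟨p, hp⟩ := this
      simp only [Finset.mem_sdiff, Finset.mem_insert, Finset.mem_singleton, not_or] at hp
      exact ⟨p, hp.2.1, Or.inr ⟨hp.2.2, u0, hu0⟩⟩
  choose p hpne hpcase using pend
  set c : V ⊕ V → Fin k := Sum.elim c0 p with hc
  have hpcf : IsPCFColoring (corona G) c := by
    constructor
    · rintro (u | u) (v | v) hadj
      · exact c0.valid ((corona_adj_ll G u v).mp hadj)
      · rw [corona_adj_lr] at hadj
        subst hadj
        exact fun h => hpne u h.symm
      · rw [corona_adj_rl] at hadj
        subst hadj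
        exact hpne v
      · exact absurd hadj (corona_adj_rr G u v)
    · rintro (v | v) -
      · -- vertex inl v : unique color j0 v in neighborhood
        refine ⟨j0 v, ?_⟩
        rcases hpcase v with ⟨hpj, hF⟩ | ⟨hpj, u0, hF⟩
        · -- pendant has color j0 v, no G-neighbor does
          refine ⟨Sum.inr v, ⟨?_, ?_⟩, ?_⟩
          · rw [mem_neighborSet, corona_adj_lr]
          · simpa [hc] using hpj
          · rintro (u | u) ⟨hu, hcu⟩
            · rw [mem_neighborSet, corona_adj_ll] at hu
              exfalso
              have : u ∈ (G.neighborFinset v).filter (fun u => c0 u = j0 v) := by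
                simp only [Finset.mem_filter, mem_neighborFinset]
                exact ⟨hu, by simpa [hc] using hcu⟩
              rw [hF] at this
              exact absurd this (Finset.notMem_empty u)
            · rw [mem_neighborSet, corona_adj_lr] at hu
              exact congrArg Sum.inr hu.symm
        · -- unique G-neighbor u0 has color j0 v, pendant doesn't
          have hu0 : u0 ∈ (G.neighborFinset v).filter (fun u => c0 u = j0 v) := by
            rw [hF]; exact Finset.mem_singleton_self u0
          simp only [Finset.mem_filter, mem_neighborFinset] at hu0
          refine ⟨Sum.inl u0, ⟨?_, ?_⟩, ?_⟩
          · rw [mem_neighborSet, corona_adj_ll]; exact hu0.1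
          · simpa [hc] using hu0.2
          · rintro (u | u) ⟨hu, hcu⟩
            · rw [mem_neighborSet, corona_adj_ll] at hu
              have : u ∈ (G.neighborFinset v).filter (fun u => c0 u = j0 v) := by
                simp only [Finset.mem_filter, mem_neighborFinset]
                exact ⟨hu, by simpa [hc] using hcu⟩
              rw [hF, Finset.mem_singleton] at this
              rw [this]
            · rw [mem_neighborSet, corona_adj_lr] at hu
              subst hu
              exact absurd (by simpa [hc] using hcu) hpj
      · -- pendant vertex inr v : only neighbor is inl v
        refine ⟨c0 v, Sum.inl v, ⟨?_, rfl⟩, ?_⟩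
        · rw [mem_neighborSet, corona_adj_rl]
        · rintro (u | u) ⟨hu, -⟩
          · rw [mem_neighborSet, corona_adj_rl] at hu
            rw [hu]
          · exact absurd (mem_neighborSet _ _ _ |>.mp hu) (corona_adj_rr G v u)
  have hmem : k ∈ {n | ∃ c : V ⊕ V → Fin n, IsPCFColoring (corona G) c} := ⟨c, hpcf⟩
  refine le_antisymm (Nat.sInf_le hmem) (le_csInf ⟨k, hmem⟩ ?_)
  rintro n ⟨cn, hcn, -⟩
  refine Nat.sInf_le ?_
  exact ⟨SimpleGraph.Coloring.mk (fun v => cn (Sum.inl v))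
    (fun {u v} h => hcn _ _ ((corona_adj_ll G u v).mpr h))⟩
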